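/- arXiv:1609.08768 — 2 statements merged into one kernel-verified Lean document; each statement's English description precedes it below -/
import Mathlib

section
/- If a finite directed graph G with filtering thresholds T = (t_1,...,t_n) is not (T+1)-robust, then there exists an assignment of initial opinions in {0, 1/2, 1} such that under any execution of the filtering-based opinion dynamics, the nodes never reach consensus: there are two nonempty disjoint sets S1, S2 of nodes whose opinions remain constantly 0 and 1 respectively for all time. -/
open Finset

variable {V : Type*}

/-- A set `S` is `(T+1)`-reachable: some node `v ∈ S` has at least `t v + 1`
neighbors outside `S`. -/
def TReachable [DecidableEq V] (N : V → Finset V) (t : V → ℕ) (S : Finset V) : Prop :=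
  ∃ v ∈ S, t v + 1 ≤ (N v \ S).card

/-- `(T+1)`-robustness: of every pair of disjoint nonempty subsets, at least one
is `(T+1)`-reachable. -/
def TRobust [Fintype V] [DecidableEq V] (N : V → Finset V) (t : V → ℕ) : Prop :=
  ∀ S₁ S₂ : Finset V, S₁.Nonempty → S₂.Nonempty → Disjoint S₁ S₂ →
    TReachable N t S₁ ∨ TReachable N t S₂

/-- `M` is a valid set of moderate neighbors of `i` at state `x`: it is obtained from
`N i` by removing a set `Rhi` of `min (t i) #` largest opinions strictly above `x i`
and a set `Rlo` of `min (t i) #` smallest opinions strictly below `x i`. -/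
def IsModerate [DecidableEq V] (N : V → Finset V) (t : V → ℕ) (x : V → ℝ) (i : V)
    (M : Finset V) : Prop :=
  ∃ Rhi Rlo : Finset V,
    Rhi ⊆ (N i).filter (fun j => x i < x j) ∧
    Rlo ⊆ (N i).filter (fun j => x j < x i) ∧
    Rhi.card = min (t i) ((N i).filter (fun j => x i < x j)).card ∧
    Rlo.card = min (t i) ((N i).filter (fun j => x j < x i)).card ∧
    (∀ j ∈ Rhi, ∀ l ∈ (N i).filter (fun j' => x i < x j'), l ∉ Rhi → x l ≤ x j) ∧
    (∀ j ∈ Rlo, ∀ l ∈ (N i).filter (fun j' => x j' < x i), l ∉ Rlo → x j ≤ x l) ∧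
    M = N i \ (Rhi ∪ Rlo)

/-- One step of the filtering-based opinion dynamics: each node updates to a convex
combination (with weights lower bounded by `η`) of its own opinion and the opinions of
its moderate neighbors. -/
def IsStep [Fintype V] [DecidableEq V] (N : V → Finset V) (t : V → ℕ) (η : ℝ)
    (x x' : V → ℝ) : Prop :=
  ∀ i, ∃ M : Finset V, IsModerate N t x i M ∧
    ∃ w : V → ℝ, (∀ j ∈ insert i M, η ≤ w j) ∧ (∑ j ∈ insert i M, w j = 1) ∧
      x' i = ∑ j ∈ insert i M, w j * x j

lemma step_zero [Fintype V] [DecidableEq V] (N : V → Finset V) (t : V → ℕ) (η : ℝ)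
    (x x' : V → ℝ) (S₁ : Finset V)
    (hcard : ∀ v ∈ S₁, (N v \ S₁).card ≤ t v)
    (h0 : ∀ i ∈ S₁, x i = 0) (hge : ∀ i, 0 ≤ x i)
    (hstep : IsStep N t η x x') (i : V) (hi : i ∈ S₁) : x' i = 0 := by
  obtain ⟨M, ⟨Rhi, Rlo, hRhi, hRlo, hchi, _, _, _, hM⟩, w, _, _, hx'⟩ := hstep i
  have hxi : x i = 0 := h0 i hi
  have hFhi : (N i).filter (fun j => x i < x j) ⊆ N i \ S₁ := by
    intro j hj
    simp only [mem_filter] at hj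
    rw [mem_sdiff]
    refine ⟨hj.1, fun hjS => ?_⟩
    have := h0 j hjS
    rw [hxi, this] at hj
    exact lt_irrefl 0 hj.2
  have hc : ((N i).filter (fun j => x i < x j)).card ≤ t i :=
    le_trans (card_le_card hFhi) (hcard i hi)
  have hRhieq : Rhi = (N i).filter (fun j => x i < x j) := by
    refine eq_of_subset_of_card_le hRhi ?_
    rw [hchi, min_eq_right hc]
  have hzero : ∀ j ∈ insert i M, x j = 0 := by
    intro j hj
    rcases mem_insert.mp hj with rfl | hjM
    · exact hxi
    · rw [hM, mem_sdiff, mem_union] at hjM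
      have hjN := hjM.1
      have hnot : j ∉ (N i).filter (fun j => x i < x j) := by
        rw [← hRhieq]; exact fun hh => hjM.2 (Or.inl hh)
      rw [mem_filter] at hnot
      push_neg at hnot
      have := hnot hjN
      rw [hxi] at this
      exact le_antisymm this (hge j)
  rw [hx']
  exact Finset.sum_eq_zero fun j hj => by rw [hzero j hj, mul_zero]

lemma step_one [Fintype V] [DecidableEq V] (N : V → Finset V) (t : V → ℕ) (η : ℝ)
    (x x' : V → ℝ) (S₂ : Finset V)
    (hcard : ∀ v ∈ S₂, (N v \ S₂).card ≤ t v)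
    (h1 : ∀ i ∈ S₂, x i = 1) (hle : ∀ i, x i ≤ 1)
    (hstep : IsStep N t η x x') (i : V) (hi : i ∈ S₂) : x' i = 1 := by
  obtain ⟨M, ⟨Rhi, Rlo, hRhi, hRlo, _, hclo, _, _, hM⟩, w, _, hsum, hx'⟩ := hstep i
  have hxi : x i = 1 := h1 i hi
  have hFlo : (N i).filter (fun j => x j < x i) ⊆ N i \ S₂ := by
    intro j hj
    simp only [mem_filter] at hj
    rw [mem_sdiff]
    refine ⟨hj.1, fun hjS => ?_⟩
    have := h1 j hjS
    rw [hxi, this] at hj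
    exact lt_irrefl 1 hj.2
  have hc : ((N i).filter (fun j => x j < x i)).card ≤ t i :=
    le_trans (card_le_card hFlo) (hcard i hi)
  have hRloeq : Rlo = (N i).filter (fun j => x j < x i) := by
    refine eq_of_subset_of_card_le hRlo ?_
    rw [hclo, min_eq_right hc]
  have hone : ∀ j ∈ insert i M, x j = 1 := by
    intro j hj
    rcases mem_insert.mp hj with rfl | hjM
    · exact hxi
    · rw [hM, mem_sdiff, mem_union] at hjM
      have hjN := hjM.1
      have hnot : j ∉ (N i).filter (fun j => x j < x i) := by
        rw [← hRloeq]; exact fun hh => hjM.2 (Or.inr hh)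
      rw [mem_filter] at hnot
      push_neg at hnot
      have := hnot hjN
      rw [hxi] at this
      exact le_antisymm (hle j) this
  rw [hx', ← hsum]
  exact Finset.sum_congr rfl fun j hj => by rw [hone j hj, mul_one]

lemma step_bounds [Fintype V] [DecidableEq V] (N : V → Finset V) (t : V → ℕ) (η : ℝ)
    (hη : 0 < η) (x x' : V → ℝ)
    (hb : ∀ i, 0 ≤ x i ∧ x i ≤ 1)
    (hstep : IsStep N t η x x') (i : V) : 0 ≤ x' i ∧ x' i ≤ 1 := by
  obtain ⟨M, _, w, hw, hsum, hx'⟩ := hstep i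
  have hwpos : ∀ j ∈ insert i M, 0 ≤ w j := fun j hj => le_trans hη.le (hw j hj)
  constructor
  · rw [hx']
    exact Finset.sum_nonneg fun j hj => mul_nonneg (hwpos j hj) (hb j).1
  · rw [hx', ← hsum]
    exact Finset.sum_le_sum fun j hj =>
      mul_le_of_le_one_right (hwpos j hj) (hb j).2

/-- If the network is not `(T+1)`-robust, there are initial opinions in `{0, 1/2, 1}`
under which consensus is never reached: two nonempty disjoint sets keep opinions `0`
and `1` respectively forever, under any execution of the dynamics. -/
theorem stmt0 [Fintype V] [DecidableEq V] (N : V → Finset V) (t : V → ℕ)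
    (h : ¬ TRobust N t) :
    ∃ x₀ : V → ℝ, (∀ i, x₀ i ∈ ({0, 1/2, 1} : Set ℝ)) ∧
      ∃ S₁ S₂ : Finset V, S₁.Nonempty ∧ S₂.Nonempty ∧ Disjoint S₁ S₂ ∧
        ∀ η : ℝ, 0 < η → ∀ x : ℕ → V → ℝ, x 0 = x₀ →
          (∀ k, IsStep N t η (x k) (x (k+1))) →
          ∀ k, (∀ i ∈ S₁, x k i = 0) ∧ (∀ i ∈ S₂, x k i = 1) := by
  rw [TRobust] at h
  push_neg at h
  obtain ⟨S₁, S₂, hne₁, hne₂, hdisj, hnr₁, hnr₂⟩ := h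
  rw [TReachable] at hnr₁ hnr₂
  push_neg at hnr₁ hnr₂
  have hcard₁ : ∀ v ∈ S₁, (N v \ S₁).card ≤ t v := fun v hv =>
    Nat.lt_succ_iff.mp (hnr₁ v hv)
  have hcard₂ : ∀ v ∈ S₂, (N v \ S₂).card ≤ t v := fun v hv =>
    Nat.lt_succ_iff.mp (hnr₂ v hv)
  refine ⟨fun i => if i ∈ S₁ then 0 else if i ∈ S₂ then 1 else 1/2, ?_, S₁, S₂,
    hne₁, hne₂, hdisj, ?_⟩
  · intro i
    by_cases h1 : i ∈ S₁ <;> by_cases h2 : i ∈ S₂ <;> simp [h1, h2]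
  · intro η hη x hx0 hstep k
    induction k with
    | zero =>
      refine ⟨fun i hi => ?_, fun i hi => ?_⟩
      · rw [hx0]; simp [hi]
      · rw [hx0]
        have : i ∉ S₁ := fun h1 => (Finset.disjoint_left.mp hdisj h1) hi
        simp [this, hi]
    | succ k ih =>
      have hb : ∀ i, 0 ≤ x k i ∧ x k i ≤ 1 := by
        clear ih
        induction k with
        | zero =>
          intro i
          rw [hx0]
          by_cases h1 : i ∈ S₁ <;> by_cases h2 : i ∈ S₂ <;> simp [h1, h2] <;> norm_num
        | succ m ihm => exact step_bounds N t η hη (x m) (x (m+1)) ihm (hstep m)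
      exact ⟨step_zero N t η (x k) (x (k+1)) S₁ hcard₁ ih.1 (fun i => (hb i).1) (hstep k),
             step_one N t η (x k) (x (k+1)) S₂ hcard₂ ih.2 (fun i => (hb i).2) (hstep k)⟩
end

section
/- Let S be a set of m vertices in G(n,p) with independent random thresholds. The probability that EVERY vertex v ∈ S has fewer than t_v + 1 neighbors outside S is at most (Σ_{t=0}^{r̄} q(t) Σ_{j=0}^{t} C(n, j) p^j (1−p)^{n−m−j})^m. -/
open Finset MeasureTheory

section
variable {n : ℕ}

def stmtFv (S : Finset (Fin n)) (v : Fin n) : Finset (Sym2 (Fin n)) :=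
  (Finset.univ \ S).image (fun u => s(u, v))

lemma stmtFv_card (S : Finset (Fin n)) (v : Fin n) : (stmtFv S v).card = n - S.card := by
  rw [stmtFv, Finset.card_image_of_injOn (fun u _ u' _ h => by
    rcases Sym2.eq_iff.1 h with ⟨h1, _⟩ | ⟨h1, h2⟩
    · exact h1
    · exact h1.trans h2)]
  rw [Finset.card_sdiff_of_subset (Finset.subset_univ S), Finset.card_univ, Fintype.card_fin]

lemma stmtFv_disjoint {S : Finset (Fin n)} {v v' : Fin n} (hv : v ∈ S) (_hv' : v' ∈ S)
    (hne : v ≠ v') : Disjoint (stmtFv S v) (stmtFv S v') := by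
  rw [Finset.disjoint_left]
  rintro e he he'
  simp only [stmtFv, Finset.mem_image, Finset.mem_sdiff, Finset.mem_univ, true_and] at he he'
  obtain ⟨u, hu, rfl⟩ := he
  obtain ⟨u', hu', h⟩ := he'
  rcases Sym2.eq_iff.1 h with ⟨_, h2⟩ | ⟨h1, _⟩
  · exact hne h2.symm
  · exact hu' (h1 ▸ hv)

lemma stmt_deg_eq (S : Finset (Fin n)) (v : Fin n) (g : Sym2 (Fin n) → Bool) :
    ((Finset.univ \ S).filter (fun u => g (s(u, v)) = true)).card
      = ((stmtFv S v).filter (fun e => g e = true)).card := by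
  classical
  rw [stmtFv, Finset.filter_image, Finset.card_image_of_injOn (fun u _ u' _ h => by
    rcases Sym2.eq_iff.1 h with ⟨h1, _⟩ | ⟨h1, h2⟩
    · exact h1
    · exact h1.trans h2)]

lemma pi_bool_cylinder (p : ENNReal) (hp : p ≤ 1) {ι : Type*} [Fintype ι]
    (E0 : Finset ι) (f : ι → Bool) :
    Measure.pi (fun _ : ι => (PMF.bernoulli p.toNNReal (by simpa using ENNReal.toNNReal_mono ENNReal.one_ne_top hp)).toMeasure)
      {g : ι → Bool | ∀ e ∈ E0, g e = f e}
      = ∏ e ∈ E0, (if f e = true then p else 1 - p) := by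
  classical
  have hset : {g : ι → Bool | ∀ e ∈ E0, g e = f e}
      = Set.pi Set.univ (fun e => if e ∈ E0 then ({f e} : Set Bool) else Set.univ) := by
    ext g
    simp only [Set.mem_setOf_eq, Set.mem_pi, Set.mem_univ, forall_true_left]
    constructor
    · intro h e
      by_cases he : e ∈ E0 <;> simp [he, h]
    · intro h e he
      have := h e
      simpa [he] using this
  rw [hset, Measure.pi_pi,
    ← Finset.prod_subset (Finset.subset_univ E0)
      (fun e _ he => by rw [if_neg he, measure_univ])]
  refine Finset.prod_congr rfl fun e he => ?_
  rw [if_pos he, PMF.toMeasure_apply_singleton _ _ (measurableSet_singleton _)]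
  cases hfe : f e <;> refine (PMF.bernoulli_apply _ _).trans ?_ <;> simp [ENNReal.coe_toNNReal (ne_top_of_le_ne_top ENNReal.one_ne_top hp)]

lemma pi_bool_bound (p : ENNReal) (hp : p ≤ 1) (S : Finset (Fin n))
    (τ : ∀ v ∈ S, ℕ) :
    Measure.pi (fun _ : Sym2 (Fin n) => (PMF.bernoulli p.toNNReal (by simpa using ENNReal.toNNReal_mono ENNReal.one_ne_top hp)).toMeasure)
      {g : Sym2 (Fin n) → Bool | ∀ v (hv : v ∈ S),
        ((Finset.univ \ S).filter (fun u => g (s(u, v)) = true)).card ≤ τ v hv}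
      ≤ ∏ x ∈ S.attach, ∑ j ∈ Finset.range (τ x.1 x.2 + 1),
          (n.choose j : ENNReal) * p ^ j * (1 - p) ^ (n - S.card - j) := by
  classical
  set ν := Measure.pi (fun _ : Sym2 (Fin n) => (PMF.bernoulli p.toNNReal (by simpa using ENNReal.toNNReal_mono ENNReal.one_ne_top hp)).toMeasure) with hν
  set t : Fin n → Finset (Finset (Sym2 (Fin n))) := fun v =>
    (stmtFv S v).powerset.filter (fun A => ∀ hv : v ∈ S, A.card ≤ τ v hv) with ht
  set C : (∀ v ∈ S, Finset (Sym2 (Fin n))) → Set (Sym2 (Fin n) → Bool) := fun φ =>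
    {g | ∀ v (hv : v ∈ S), ∀ e ∈ stmtFv S v, g e = decide (e ∈ φ v hv)} with hC
  -- covering
  have hcover : {g : Sym2 (Fin n) → Bool | ∀ v (hv : v ∈ S),
      ((Finset.univ \ S).filter (fun u => g (s(u, v)) = true)).card ≤ τ v hv}
      ⊆ ⋃ φ ∈ S.pi t, C φ := by
    intro g hg
    refine Set.mem_iUnion₂.2 ⟨fun v _ => (stmtFv S v).filter (fun e => g e = true), ?_, ?_⟩
    · rw [Finset.mem_pi]
      intro v hv
      rw [ht]
      simp only [Finset.mem_filter, Finset.mem_powerset]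
      exact ⟨Finset.filter_subset _ _, fun hv' => by
        rw [← stmt_deg_eq]; exact hg v hv'⟩
    · intro v hv e he
      by_cases hge : g e = true <;> simp [hge, he]
  refine le_trans (measure_mono hcover) ?_
  refine le_trans (measure_biUnion_finset_le _ _) ?_
  -- measure of each cylinder
  have hCmeas : ∀ φ ∈ S.pi t, ν (C φ)
      = ∏ x ∈ S.attach, p ^ (φ x.1 x.2).card * (1 - p) ^ (n - S.card - (φ x.1 x.2).card) := by
    intro φ hφ
    have hsubA : ∀ v (hv : v ∈ S), φ v hv ⊆ stmtFv S v := by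
      intro v hv
      have := Finset.mem_pi.1 hφ v hv
      rw [ht] at this
      simp only [Finset.mem_filter, Finset.mem_powerset] at this
      exact this.1
    have hkey : ∀ v (hv : v ∈ S) e, e ∈ stmtFv S v →
        ((∃ v', ∃ hv' : v' ∈ S, e ∈ φ v' hv') ↔ e ∈ φ v hv) := by
      intro v hv e heF
      constructor
      · rintro ⟨v', hv', h'⟩
        by_cases hvv : v = v'
        · subst hvv; exact h'
        · exact absurd ((Finset.disjoint_left.1 (stmtFv_disjoint hv hv' hvv)) heF)
            (fun hx => hx (hsubA v' hv' h'))
      · intro h; exact ⟨v, hv, h⟩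
    have hCset : C φ = {g : Sym2 (Fin n) → Bool | ∀ e ∈ S.biUnion (stmtFv S),
        g e = decide (∃ v', ∃ hv' : v' ∈ S, e ∈ φ v' hv')} := by
      ext g
      simp only [hC, Set.mem_setOf_eq]
      constructor
      · intro h e he
        obtain ⟨v, hv, heF⟩ := Finset.mem_biUnion.1 he
        rw [h v hv e heF, decide_eq_decide]
        exact (hkey v hv e heF).symm
      · intro h v hv e heF
        rw [h e (Finset.mem_biUnion.2 ⟨v, hv, heF⟩), decide_eq_decide]
        exact hkey v hv e heF
    rw [hCset, hν, pi_bool_cylinder p hp,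
      Finset.prod_biUnion (fun v hv v' hv' hne => stmtFv_disjoint hv hv' hne),
      ← Finset.prod_attach S (fun v => ∏ e ∈ stmtFv S v,
        (if (decide (∃ v', ∃ hv' : v' ∈ S, e ∈ φ v' hv')) = true then p else 1 - p))]
    refine Finset.prod_congr rfl fun x _ => ?_
    have h1 : ∀ e ∈ stmtFv S x.1,
        (if (decide (∃ v', ∃ hv' : v' ∈ S, e ∈ φ v' hv')) = true then p else 1 - p)
          = (if e ∈ φ x.1 x.2 then p else 1 - p) := by
      intro e he
      simp only [decide_eq_true_eq]
      exact if_congr (hkey x.1 x.2 e he) rfl rfl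
    rw [Finset.prod_congr rfl h1, ← Finset.prod_sdiff (hsubA x.1 x.2),
      Finset.prod_congr rfl (fun e he => if_neg (Finset.mem_sdiff.1 he).2),
      Finset.prod_congr rfl (fun e (he : e ∈ φ x.1 x.2) => if_pos he),
      Finset.prod_const, Finset.prod_const,
      Finset.card_sdiff_of_subset (hsubA x.1 x.2), stmtFv_card, mul_comm]
  rw [Finset.sum_congr rfl hCmeas]
  have hps := Finset.prod_sum (s := S) (t := t)
    (f := fun (_ : Fin n) (A : Finset (Sym2 (Fin n))) =>
      p ^ A.card * (1 - p) ^ (n - S.card - A.card))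
  rw [← hps, ← Finset.prod_attach S (fun v =>
    ∑ A ∈ t v, p ^ A.card * (1 - p) ^ (n - S.card - A.card))]
  refine Finset.prod_le_prod' fun x _ => ?_
  have hsub : t x.1 ⊆ (Finset.range (τ x.1 x.2 + 1)).biUnion
      (fun j => Finset.powersetCard j (stmtFv S x.1)) := by
    intro A hA
    rw [ht] at hA
    simp only [Finset.mem_filter, Finset.mem_powerset] at hA
    exact Finset.mem_biUnion.2 ⟨A.card, Finset.mem_range.2 (Nat.lt_succ_of_le (hA.2 x.2)),
      Finset.mem_powersetCard.2 ⟨hA.1, rfl⟩⟩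
  refine le_trans (Finset.sum_le_sum_of_subset hsub) ?_
  rw [Finset.sum_biUnion (fun i _ j _ hne => Finset.disjoint_left.2 fun A hAi hAj =>
    hne (((Finset.mem_powersetCard.1 hAi).2).symm.trans (Finset.mem_powersetCard.1 hAj).2))]
  refine Finset.sum_le_sum fun j _ => ?_
  have hconst : ∀ A ∈ Finset.powersetCard j (stmtFv S x.1),
      p ^ A.card * (1 - p) ^ (n - S.card - A.card) = p ^ j * (1 - p) ^ (n - S.card - j) := by
    intro A hA; rw [(Finset.mem_powersetCard.1 hA).2]
  rw [Finset.sum_congr rfl hconst, Finset.sum_const, Finset.card_powersetCard, stmtFv_card,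
    nsmul_eq_mul, mul_assoc]
  exact mul_le_mul_left (Nat.cast_le.2 (Nat.choose_le_choose j (Nat.sub_le n S.card))) _

end

/-- In the Erdős–Rényi random graph `G(n,p)` with independent random vertex thresholds
drawn from `q` (supported on `{0,…,rbar}`): for a fixed set `S` of `m` vertices, the
probability that EVERY vertex `v ∈ S` has fewer than `t_v + 1` neighbors outside `S`
is at most `(∑_{t=0}^{rbar} q(t) ∑_{j=0}^{t} C(n,j) p^j (1−p)^{n−m−j})^m`. -/
theorem stmt15 (n : ℕ) (p : ENNReal) (hp : p ≤ 1) (q : PMF ℕ) (rbar : ℕ)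
    (hq : ∀ t, rbar < t → q t = 0)
    (S : Finset (Fin n)) (m : ℕ) (hm : S.card = m)
    (μ : Measure ((Sym2 (Fin n) → Bool) × (Fin n → ℕ)))
    (hμ : μ = (Measure.pi fun _ : Sym2 (Fin n) => (PMF.bernoulli p.toNNReal (by simpa using ENNReal.toNNReal_mono ENNReal.one_ne_top hp)).toMeasure).prod
      (Measure.pi fun _ : Fin n => q.toMeasure)) :
    μ {ω | ∀ v ∈ S, ((Finset.univ \ S).filter
        (fun u => ω.1 (s(u, v)) = true)).card < ω.2 v + 1} ≤
      (∑ t ∈ Finset.range (rbar + 1), q t *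
        ∑ j ∈ Finset.range (t + 1),
          (n.choose j : ENNReal) * p ^ j * (1 - p) ^ (n - m - j)) ^ m := by
  classical
  subst hμ
  subst hm
  set ν := Measure.pi (fun _ : Sym2 (Fin n) => (PMF.bernoulli p.toNNReal (by simpa using ENNReal.toNNReal_mono ENNReal.one_ne_top hp)).toMeasure) with hν
  set κ := Measure.pi (fun _ : Fin n => q.toMeasure) with hκ
  set b : ℕ → ENNReal := fun t => ∑ j ∈ Finset.range (t + 1),
    (n.choose j : ENNReal) * p ^ j * (1 - p) ^ (n - S.card - j) with hb
  set A : (∀ v ∈ S, ℕ) → Set (Sym2 (Fin n) → Bool) := fun φ =>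
    {g | ∀ v (hv : v ∈ S),
      ((Finset.univ \ S).filter (fun u => g (s(u, v)) = true)).card ≤ φ v hv} with hA
  set B : (∀ v ∈ S, ℕ) → Set (Fin n → ℕ) := fun φ =>
    {y | ∀ v (hv : v ∈ S), y v = φ v hv} with hB
  set N : Set ((Sym2 (Fin n) → Bool) × (Fin n → ℕ)) :=
    Set.univ ×ˢ {y | ∃ v ∈ S, rbar < y v} with hN
  set T : Fin n → Finset ℕ := fun _ => Finset.range (rbar + 1) with hT
  -- covering
  have hcover : {ω : (Sym2 (Fin n) → Bool) × (Fin n → ℕ) | ∀ v ∈ S, ((Finset.univ \ S).filter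
      (fun u => ω.1 (s(u, v)) = true)).card < ω.2 v + 1}
      ⊆ N ∪ ⋃ φ ∈ S.pi T, A φ ×ˢ B φ := by
    intro ω hω
    by_cases hbig : ∃ v ∈ S, rbar < ω.2 v
    · exact Or.inl ⟨Set.mem_univ _, hbig⟩
    · push_neg at hbig
      refine Or.inr (Set.mem_iUnion₂.2 ⟨fun v _ => ω.2 v, ?_, ?_, ?_⟩)
      · rw [Finset.mem_pi]
        intro v hv
        exact Finset.mem_range.2 (Nat.lt_succ_of_le (hbig v hv))
      · intro v hv
        exact Nat.lt_succ_iff.1 (hω v hv)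
      · intro v hv
        rfl
  refine le_trans (measure_mono hcover) (le_trans (measure_union_le _ _) ?_)
  -- null part
  have hNzero : (ν.prod κ) N = 0 := by
    rw [hN, Measure.prod_prod]
    have : κ {y : Fin n → ℕ | ∃ v ∈ S, rbar < y v} = 0 := by
      have hsub : {y : Fin n → ℕ | ∃ v ∈ S, rbar < y v} ⊆ ⋃ v ∈ S, {y | rbar < y v} := by
        intro y ⟨v, hv, h⟩; exact Set.mem_iUnion₂.2 ⟨v, hv, h⟩
      refine le_antisymm (le_trans (measure_mono hsub)
        (le_trans (measure_biUnion_finset_le _ _) ?_)) (zero_le')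
      have hone : ∀ v ∈ S, κ {y : Fin n → ℕ | rbar < y v} = 0 := by
        intro v _
        have hset : {y : Fin n → ℕ | rbar < y v}
            = Set.pi Set.univ (fun u => if u = v then {s : ℕ | rbar < s} else Set.univ) := by
          ext y
          simp only [Set.mem_setOf_eq, Set.mem_pi, Set.mem_univ, forall_true_left]
          constructor
          · intro h u
            by_cases hu : u = v <;> simp [hu, h]
          · intro h
            have := h v
            simpa using this
        rw [hκ, hset, Measure.pi_pi]
        refine Finset.prod_eq_zero (Finset.mem_univ v) ?_
        rw [if_pos rfl]
        rw [PMF.toMeasure_apply_eq_zero_iff _ ((Set.to_countable _).measurableSet)]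
        exact Set.disjoint_left.2 fun s hs hlt => hs (hq s hlt)
      rw [Finset.sum_congr rfl hone, Finset.sum_const, smul_zero]
    rw [this, mul_zero]
  rw [hNzero, zero_add]
  -- bound the sum
  refine le_trans (measure_biUnion_finset_le _ _) ?_
  have hterm : ∀ φ ∈ S.pi T, (ν.prod κ) (A φ ×ˢ B φ)
      ≤ ∏ x ∈ S.attach, q (φ x.1 x.2) * b (φ x.1 x.2) := by
    intro φ _
    rw [Measure.prod_prod]
    have hBm : κ (B φ) = ∏ x ∈ S.attach, q (φ x.1 x.2) := by
      have hset : B φ = Set.pi Set.univ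
          (fun v => if h : v ∈ S then ({φ v h} : Set ℕ) else Set.univ) := by
        ext y
        simp only [hB, Set.mem_setOf_eq, Set.mem_pi, Set.mem_univ, forall_true_left]
        constructor
        · intro h u
          by_cases hu : u ∈ S
          · simp [hu, h u hu]
          · simp [hu]
        · intro h v hv
          have := h v
          rw [dif_pos hv] at this
          simpa using this
      rw [hκ, hset, Measure.pi_pi,
        ← Finset.prod_subset (Finset.subset_univ S) (fun v _ hv => by simp [dif_neg hv]),
        ← Finset.prod_attach S (fun v => q.toMeasure (if h : v ∈ S then ({φ v h} : Set ℕ)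
          else Set.univ))]
      refine Finset.prod_congr rfl fun x _ => ?_
      rw [dif_pos x.2, PMF.toMeasure_apply_singleton _ _ (measurableSet_singleton _)]
    have hAm : ν (A φ) ≤ ∏ x ∈ S.attach, b (φ x.1 x.2) := pi_bool_bound p hp S φ
    rw [hBm]
    refine le_trans (mul_le_mul_left hAm _) ?_
    rw [← Finset.prod_mul_distrib]
    exact le_of_eq (Finset.prod_congr rfl fun x _ => mul_comm _ _)
  refine le_trans (Finset.sum_le_sum hterm) ?_
  have hps := Finset.prod_sum (s := S) (t := T)
    (f := fun (_ : Fin n) (s : ℕ) => q s * b s)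
  rw [← hps]
  simp only [hT]
  rw [Finset.prod_const]
end
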